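/- Let ρ : ℝ → ℂ^{N_g × N_g} be three times differentiable, H : ℝ → ℂ^{N_g × N_g} twice differentiable, and let H_t, H_tt : ℝ → ℂ^{N_g × N_g}, A, B : ℝ → L(ℂ^{N_g × N_g}, ℂ^{N_g × N_g}), and C : ℝ → Bil(ℂ^{N_g × N_g} × ℂ^{N_g × N_g}, ℂ^{N_g × N_g}) be given. Assume for all t: (i) i ρ' = [H, ρ]; (ii) H' = H_t + A(ρ'); (iii) H_t' = H_tt + B(ρ'); (iv) A'(t)(X) = B(t)(X) + C(t)(ρ'(t), X) for all matrices X. Then in the operator norm, ‖ρ'''(t)‖ ≤ ‖[H_tt, ρ]‖ + 2‖[B([H, ρ]), ρ]‖ + ‖[C([H, ρ], [H, ρ]), ρ]‖ + ‖[A([H_t, ρ]), ρ]‖ + ‖[A([A([H, ρ]), ρ]), ρ]‖ + ‖[A([H, [H, ρ]]), ρ]‖ + 2‖[H_t, [H, ρ]]‖ + ‖[H, [H_t, ρ]]‖ + 2‖[A([H, ρ]), [H, ρ]]‖ + ‖[H, [A([H, ρ]), ρ]]‖ + ‖[H, [H, [H, ρ]]]‖, with all quantities evaluated at t. -/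

import Mathlib

open Matrix
open scoped Matrix.Norms.L2Operator

lemma key_lin {E : Type*} [NormedAddCommGroup E] [NormedSpace ℂ E] [FiniteDimensional ℂ E]
    (A : ℝ → (E →ₗ[ℂ] E)) (A' : E →ₗ[ℂ] E) (v : ℝ → E) (v' : E) (t : ℝ)
    (hA : ∀ X, HasDerivAt (fun s => A s X) (A' X) t)
    (hv : HasDerivAt v v' t) :
    HasDerivAt (fun s => A s (v s)) (A' (v t) + A t v') t := by
  classical
  set b := Module.finBasis ℂ E with hb
  have hcoord : ∀ k, HasDerivAt (fun s => b.repr (v s) k) (b.repr v' k) t := by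
    intro k
    have := ((LinearMap.toContinuousLinearMap
        ((b.coord k).restrictScalars ℝ)).hasFDerivAt (x := v t)).comp_hasDerivAt t hv
    exact this
  have hterm : ∀ k, HasDerivAt (fun s => (b.repr (v s) k) • A s (b k))
      ((b.repr (v t) k) • A' (b k) + (b.repr v' k) • A t (b k)) t := by
    intro k
    exact (hcoord k).smul (hA (b k))
  have hsum : HasDerivAt (fun s => ∑ k, (b.repr (v s) k) • A s (b k))
      (∑ k, ((b.repr (v t) k) • A' (b k) + (b.repr v' k) • A t (b k))) t :=
    HasDerivAt.fun_sum (fun k _ => hterm k)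
  have hfun : (fun s => ∑ k, (b.repr (v s) k) • A s (b k)) = fun s => A s (v s) := by
    funext s
    conv_rhs => rw [← b.sum_repr (v s)]
    rw [map_sum]
    simp [_root_.map_smul]
  rw [hfun] at hsum
  convert hsum using 1
  rw [Finset.sum_add_distrib]
  have h1 : ∑ k, (b.repr v' k) • A t (b k) = A t v' := by
    conv_rhs => rw [← b.sum_repr v']
    rw [map_sum]; simp [_root_.map_smul]
  have h2 : ∑ k, (b.repr (v t) k) • A' (b k) = A' (v t) := by
    conv_rhs => rw [← b.sum_repr (v t)]
    rw [map_sum]; simp [_root_.map_smul]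
  rw [h1, h2]

lemma key_lie {𝔸 : Type*} [NormedRing 𝔸] [NormedAlgebra ℝ 𝔸] {f g : ℝ → 𝔸} {f' g' : 𝔸} {t : ℝ}
    (hf : HasDerivAt f f' t) (hg : HasDerivAt g g' t) :
    HasDerivAt (fun s => ⁅f s, g s⁆) (⁅f', g t⁆ + ⁅f t, g'⁆) t := by
  have h := (hf.mul hg).sub (hg.mul hf)
  convert h using 1
  · rfl
  · funext s; simp only [Ring.lie_def, Pi.sub_apply, Pi.mul_apply]
  · simp only [Ring.lie_def]
    abel

theorem vonNeumann_third_derivative_density_bound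
    (Ng : ℕ)
    (ρ H Ht Htt : ℝ → Matrix (Fin Ng) (Fin Ng) ℂ)
    (A B : ℝ → (Matrix (Fin Ng) (Fin Ng) ℂ →ₗ[ℂ] Matrix (Fin Ng) (Fin Ng) ℂ))
    (C : ℝ → (Matrix (Fin Ng) (Fin Ng) ℂ →ₗ[ℂ]
          Matrix (Fin Ng) (Fin Ng) ℂ →ₗ[ℂ] Matrix (Fin Ng) (Fin Ng) ℂ))
    (hρ : Differentiable ℝ ρ) (hρ' : Differentiable ℝ (deriv ρ))
    (hρ'' : Differentiable ℝ (deriv (deriv ρ)))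
    (hH : Differentiable ℝ H) (hH' : Differentiable ℝ (deriv H))
    (hHt : Differentiable ℝ Ht)
    (heqρ : ∀ t, Complex.I • deriv ρ t = ⁅H t, ρ t⁆)
    (hchainH : ∀ t, deriv H t = Ht t + A t (deriv ρ t))
    (hchainHt : ∀ t, deriv Ht t = Htt t + B t (deriv ρ t))
    (hchainA : ∀ t X, HasDerivAt (fun s => A s X) (B t X + C t (deriv ρ t) X) t) :
    ∀ t, ‖deriv (deriv (deriv ρ)) t‖ ≤
      ‖⁅Htt t, ρ t⁆‖
      + 2 * ‖⁅B t ⁅H t, ρ t⁆, ρ t⁆‖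
      + ‖⁅C t ⁅H t, ρ t⁆ ⁅H t, ρ t⁆, ρ t⁆‖
      + ‖⁅A t ⁅Ht t, ρ t⁆, ρ t⁆‖
      + ‖⁅A t ⁅A t ⁅H t, ρ t⁆, ρ t⁆, ρ t⁆‖
      + ‖⁅A t ⁅H t, ⁅H t, ρ t⁆⁆, ρ t⁆‖
      + 2 * ‖⁅Ht t, ⁅H t, ρ t⁆⁆‖
      + ‖⁅H t, ⁅Ht t, ρ t⁆⁆‖
      + 2 * ‖⁅A t ⁅H t, ρ t⁆, ⁅H t, ρ t⁆⁆‖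
      + ‖⁅H t, ⁅A t ⁅H t, ρ t⁆, ρ t⁆⁆‖
      + ‖⁅H t, ⁅H t, ⁅H t, ρ t⁆⁆⁆‖ := by
  intro t
  have hρd : ∀ s, HasDerivAt ρ (deriv ρ s) s := fun s => (hρ s).hasDerivAt
  have hρ'd : ∀ s, HasDerivAt (deriv ρ) (deriv (deriv ρ) s) s := fun s => (hρ' s).hasDerivAt
  have hρ''d : ∀ s, HasDerivAt (deriv (deriv ρ)) (deriv (deriv (deriv ρ)) s) s :=
    fun s => (hρ'' s).hasDerivAt
  have hHd : ∀ s, HasDerivAt H (deriv H s) s := fun s => (hH s).hasDerivAt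
  have hHtd : ∀ s, HasDerivAt Ht (deriv Ht s) s := fun s => (hHt s).hasDerivAt
  -- second derivative identity
  have eq2 : ∀ s, Complex.I • deriv (deriv ρ) s = ⁅deriv H s, ρ s⁆ + ⁅H s, deriv ρ s⁆ := by
    intro s
    have h1 : HasDerivAt (fun u => Complex.I • deriv ρ u) (Complex.I • deriv (deriv ρ) s) s :=
      (hρ'd s).const_smul Complex.I
    have h2 : HasDerivAt (fun u => ⁅H u, ρ u⁆)
        (⁅deriv H s, ρ s⁆ + ⁅H s, deriv ρ s⁆) s := key_lie (hHd s) (hρd s)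
    have hfe : (fun u => Complex.I • deriv ρ u) = fun u => ⁅H u, ρ u⁆ := funext heqρ
    rw [hfe] at h1
    exact h1.unique h2
  -- third derivative identity
  have eq3 : Complex.I • deriv (deriv (deriv ρ)) t
      = (⁅deriv (deriv H) t, ρ t⁆ + ⁅deriv H t, deriv ρ t⁆)
        + (⁅deriv H t, deriv ρ t⁆ + ⁅H t, deriv (deriv ρ) t⁆) := by
    have h1 : HasDerivAt (fun u => Complex.I • deriv (deriv ρ) u)
        (Complex.I • deriv (deriv (deriv ρ)) t) t := (hρ''d t).const_smul Complex.I
    have h2 : HasDerivAt (fun u => ⁅deriv H u, ρ u⁆ + ⁅H u, deriv ρ u⁆)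
        ((⁅deriv (deriv H) t, ρ t⁆ + ⁅deriv H t, deriv ρ t⁆)
          + (⁅deriv H t, deriv ρ t⁆ + ⁅H t, deriv (deriv ρ) t⁆)) t :=
      (key_lie ((hH' t).hasDerivAt) (hρd t)).add (key_lie (hHd t) (hρ'd t))
    have hfe : (fun u => Complex.I • deriv (deriv ρ) u)
        = fun u => ⁅deriv H u, ρ u⁆ + ⁅H u, deriv ρ u⁆ := funext eq2
    rw [hfe] at h1
    exact h1.unique h2
  -- second derivative of H
  have hA' : HasDerivAt (fun s => A s (deriv ρ s))
      ((B t + C t (deriv ρ t)) (deriv ρ t) + A t (deriv (deriv ρ) t)) t :=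
    key_lin A (B t + C t (deriv ρ t)) (deriv ρ) (deriv (deriv ρ) t) t
      (fun X => by simpa using hchainA t X) (hρ'd t)
  have eqH'' : deriv (deriv H) t
      = deriv Ht t + ((B t + C t (deriv ρ t)) (deriv ρ t) + A t (deriv (deriv ρ) t)) := by
    have h2 := (hHtd t).add hA'
    have h1 : HasDerivAt (fun s => Ht s + A s (deriv ρ s)) (deriv (deriv H) t) t := by
      refine HasDerivAt.congr_of_eventuallyEq ((hH' t).hasDerivAt) ?_
      filter_upwards with s using (hchainH s).symm
    exact h1.unique h2
  -- first derivative in commutator form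
  have hd1 : deriv ρ t = (-Complex.I) • ⁅H t, ρ t⁆ := by
    have h := heqρ t
    have : (-Complex.I) • (Complex.I • deriv ρ t) = deriv ρ t := by
      rw [smul_smul]; simp [Complex.I_mul_I]
    rw [← this, h]
  -- second derivative in commutator form
  have hd2 : deriv (deriv ρ) t
      = (-Complex.I) • (⁅deriv H t, ρ t⁆ + ⁅H t, deriv ρ t⁆) := by
    have h := eq2 t
    have : (-Complex.I) • (Complex.I • deriv (deriv ρ) t) = deriv (deriv ρ) t := by
      rw [smul_smul]; simp [Complex.I_mul_I]
    rw [← this, h]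
  -- the master identity
  have master : Complex.I • deriv (deriv (deriv ρ)) t
      = ⁅Htt t, ρ t⁆
        + (-(2*Complex.I)) • ⁅B t ⁅H t, ρ t⁆, ρ t⁆
        + (-1 : ℂ) • ⁅C t ⁅H t, ρ t⁆ ⁅H t, ρ t⁆, ρ t⁆
        + (-Complex.I) • ⁅A t ⁅Ht t, ρ t⁆, ρ t⁆
        + (-1 : ℂ) • ⁅A t ⁅A t ⁅H t, ρ t⁆, ρ t⁆, ρ t⁆
        + (-1 : ℂ) • ⁅A t ⁅H t, ⁅H t, ρ t⁆⁆, ρ t⁆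
        + (-(2*Complex.I)) • ⁅Ht t, ⁅H t, ρ t⁆⁆
        + (-Complex.I) • ⁅H t, ⁅Ht t, ρ t⁆⁆
        + (-2 : ℂ) • ⁅A t ⁅H t, ρ t⁆, ⁅H t, ρ t⁆⁆
        + (-1 : ℂ) • ⁅H t, ⁅A t ⁅H t, ρ t⁆, ρ t⁆⁆
        + (-1 : ℂ) • ⁅H t, ⁅H t, ⁅H t, ρ t⁆⁆⁆ := by
    rw [eq3, eqH'', hchainHt t, hd2, hchainH t, hd1]
    simp only [map_add, _root_.map_smul, LinearMap.add_apply, LinearMap.smul_apply,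
      lie_add, add_lie, lie_smul, smul_lie, smul_add, smul_smul]
    simp only [Ring.lie_def, mul_add, add_mul, mul_sub, sub_mul, mul_smul_comm, smul_mul_assoc, smul_sub, smul_add, smul_smul, map_add, map_sub, _root_.map_smul, LinearMap.add_apply, LinearMap.sub_apply, LinearMap.smul_apply]
    match_scalars <;> (ring_nf; try simp [Complex.I_sq])
  -- norms
  have hnorm : ‖deriv (deriv (deriv ρ)) t‖ = ‖Complex.I • deriv (deriv (deriv ρ)) t‖ := by
    rw [norm_smul]; simp
  rw [hnorm, master]
  have tri : ∀ (a b : Matrix (Fin Ng) (Fin Ng) ℂ) (ca cb : ℝ),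
      ‖a‖ ≤ ca → ‖b‖ ≤ cb → ‖a + b‖ ≤ ca + cb :=
    fun a b ca cb ha hb => (norm_add_le a b).trans (add_le_add ha hb)
  have nI : ∀ x : Matrix (Fin Ng) (Fin Ng) ℂ, ‖(-Complex.I) • x‖ ≤ ‖x‖ := by
    intro x; rw [norm_smul]; simp
  have n2I : ∀ x : Matrix (Fin Ng) (Fin Ng) ℂ, ‖(-(2*Complex.I)) • x‖ ≤ 2 * ‖x‖ := by
    intro x; rw [norm_smul]; simp
  have n1 : ∀ x : Matrix (Fin Ng) (Fin Ng) ℂ, ‖(-1 : ℂ) • x‖ ≤ ‖x‖ := by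
    intro x; rw [norm_smul]; simp
  have n2 : ∀ x : Matrix (Fin Ng) (Fin Ng) ℂ, ‖(-2 : ℂ) • x‖ ≤ 2 * ‖x‖ := by
    intro x; rw [norm_smul]; simp
  exact tri _ _ _ _ (tri _ _ _ _ (tri _ _ _ _ (tri _ _ _ _ (tri _ _ _ _ (tri _ _ _ _
    (tri _ _ _ _ (tri _ _ _ _ (tri _ _ _ _ (tri _ _ _ _ le_rfl (n2I _)) (n1 _)) (nI _))
    (n1 _)) (n1 _)) (n2I _)) (nI _)) (n2 _)) (n1 _)) (n1 _)
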